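/- Let n ≥ 1 and let r be a natural number with 1 ≤ r ≤ 2n. Then for every natural number l ≥ 0 one has C(l+2n+1, l+1) ≥ r·C(l+2n−r, l). -/
import Mathlib


/-- For the contactomorphism pseudogroup of a `(2n+1)`-dimensional contact manifold acting on
codimension-`r` submanifolds (`1 ≤ r ≤ 2n`), the transversality dimension inequality
`dim g^l ≥ dim h^l` holds for all `l`. -/
theorem contact_pseudogroup_dim_trans (n r : ℕ) (hn : 1 ≤ n) (hr1 : 1 ≤ r)
    (hr2 : r ≤ 2 * n) :
    ∀ l : ℕ, Nat.choose (l + 2 * n + 1) (l + 1) ≥ r * Nat.choose (l + 2 * n - r) l := by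
  intro l
  have hsub : l + 2 * n - r + r = l + 2 * n := by omega
  calc r * Nat.choose (l + 2 * n - r) l
      = ∑ _i ∈ Finset.Ico (l + 2 * n - r) (l + 2 * n), Nat.choose (l + 2 * n - r) l := by
        rw [Finset.sum_const, Nat.card_Ico, smul_eq_mul]
        congr 1; omega
    _ ≤ ∑ i ∈ Finset.Ico (l + 2 * n - r) (l + 2 * n), Nat.choose i l := by
        apply Finset.sum_le_sum
        intro i hi
        exact Nat.choose_le_choose l (Finset.mem_Ico.mp hi).1
    _ ≤ ∑ i ∈ Finset.Icc l (l + 2 * n), Nat.choose i l := by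
        apply Finset.sum_le_sum_of_subset
        intro i hi
        rw [Finset.mem_Ico] at hi
        rw [Finset.mem_Icc]
        omega
    _ = Nat.choose (l + 2 * n + 1) (l + 1) := Nat.sum_Icc_choose _ _
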